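/- Let b ∈ B_n be a pure braid in the k-th term of the lower central series of PB_n, and let A(b) ∈ Aut(F_n) be its image under the Artin representation, so that A(b)(x_i) = l_i(b)^{-1} x_i l_i(b) for longitudes l_i(b). Then each longitude l_i(b) lies in the k-th term of the lower central series of the free group F_n. -/

import Mathlib

/-- The braid relations on `m` generators `σ₁,…,σ_m` (braid group on `m+1` strands):
`σᵢσⱼσᵢ = σⱼσᵢσⱼ` for `|i-j| = 1` and `σᵢσⱼ = σⱼσᵢ` for `|i-j| ≥ 2`. -/
def braidRels (m : ℕ) : Set (FreeGroup (Fin m)) :=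
  {r | (∃ i j : Fin m, (i : ℕ) + 1 = (j : ℕ) ∧
          r = FreeGroup.of i * FreeGroup.of j * FreeGroup.of i *
              (FreeGroup.of j * FreeGroup.of i * FreeGroup.of j)⁻¹) ∨
       (∃ i j : Fin m, (i : ℕ) + 1 < (j : ℕ) ∧
          r = FreeGroup.of i * FreeGroup.of j * (FreeGroup.of j * FreeGroup.of i)⁻¹)}

/-- The braid group on `m+1` strands. -/
abbrev BraidGroup (m : ℕ) := PresentedGroup (braidRels m)


open Subgroup
open scoped commutatorElement

universe u

theorem lcs_map_eq {G : Type*} {H : Type*} [Group G] [Group H] (f : G →* H)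
    (hf : Function.Surjective f) (n : ℕ) :
    (Subgroup.lowerCentralSeries (⊤ : Subgroup G) n).map f = Subgroup.lowerCentralSeries (⊤ : Subgroup H) n := by
  induction n with
  | zero => simpa using Subgroup.map_top_of_surjective f hf
  | succ n ih =>
    show Subgroup.map f ⁅Subgroup.lowerCentralSeries (⊤ : Subgroup G) n, ⊤⁆ = ⁅Subgroup.lowerCentralSeries (⊤ : Subgroup H) n, ⊤⁆
    rw [Subgroup.map_commutator, ih, Subgroup.map_top_of_surjective f hf]

theorem lcs_comm (b : ℕ) : ∀ {G : Type u} [Group G] (a : ℕ),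
    ⁅Subgroup.lowerCentralSeries (⊤ : Subgroup G) a, Subgroup.lowerCentralSeries (⊤ : Subgroup G) b⁆ ≤ Subgroup.lowerCentralSeries (⊤ : Subgroup G) (a + b + 1) := by
  induction b with
  | zero =>
    intro G _ a
    exact le_of_eq (rfl : ⁅Subgroup.lowerCentralSeries (⊤ : Subgroup G) a, ⊤⁆ = Subgroup.lowerCentralSeries (⊤ : Subgroup G) (a+1))
  | succ b ih =>
    intro G _ a
    set N := Subgroup.lowerCentralSeries (⊤ : Subgroup G) (a + b + 2) with hN
    have hsur : Function.Surjective (QuotientGroup.mk' N) := QuotientGroup.mk'_surjective N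
    have goal' : (⁅Subgroup.lowerCentralSeries (⊤ : Subgroup G) a, Subgroup.lowerCentralSeries (⊤ : Subgroup G) (b+1)⁆).map
        (QuotientGroup.mk' N) = ⊥ → ⁅Subgroup.lowerCentralSeries (⊤ : Subgroup G) a, Subgroup.lowerCentralSeries (⊤ : Subgroup G) (b+1)⁆ ≤
        Subgroup.lowerCentralSeries (⊤ : Subgroup G) (a + (b+1) + 1) := by
      rw [Subgroup.map_eq_bot_iff, QuotientGroup.ker_mk']
      exact fun h => h
    apply goal'
    rw [Subgroup.map_commutator, lcs_map_eq _ hsur, lcs_map_eq _ hsur]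
    set Q := G ⧸ N with hQ
    have hQbot : Subgroup.lowerCentralSeries (⊤ : Subgroup Q) (a + b + 2) = ⊥ := by
      rw [← lcs_map_eq (QuotientGroup.mk' N) hsur, Subgroup.map_eq_bot_iff,
        QuotientGroup.ker_mk']
    have h1 : ⁅⁅(⊤ : Subgroup Q), Subgroup.lowerCentralSeries (⊤ : Subgroup Q) a⁆, Subgroup.lowerCentralSeries (⊤ : Subgroup Q) b⁆ = ⊥ := by
      rw [Subgroup.commutator_comm (⊤ : Subgroup Q)]
      rw [← le_bot_iff, ← hQbot]
      have harith : (a+1) + b + 1 = a + b + 2 := by omega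
      calc ⁅⁅Subgroup.lowerCentralSeries (⊤ : Subgroup Q) a, ⊤⁆, Subgroup.lowerCentralSeries (⊤ : Subgroup Q) b⁆
          = ⁅Subgroup.lowerCentralSeries (⊤ : Subgroup Q) (a+1), Subgroup.lowerCentralSeries (⊤ : Subgroup Q) b⁆ := rfl
        _ ≤ Subgroup.lowerCentralSeries (⊤ : Subgroup Q) ((a+1) + b + 1) := ih (a+1)
        _ = Subgroup.lowerCentralSeries (⊤ : Subgroup Q) (a + b + 2) := by rw [harith]
    have h2 : ⁅⁅Subgroup.lowerCentralSeries (⊤ : Subgroup Q) a, Subgroup.lowerCentralSeries (⊤ : Subgroup Q) b⁆, (⊤ : Subgroup Q)⁆ = ⊥ := by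
      rw [← le_bot_iff, ← hQbot]
      calc ⁅⁅Subgroup.lowerCentralSeries (⊤ : Subgroup Q) a, Subgroup.lowerCentralSeries (⊤ : Subgroup Q) b⁆, (⊤ : Subgroup Q)⁆
          ≤ ⁅Subgroup.lowerCentralSeries (⊤ : Subgroup Q) (a + b + 1), (⊤ : Subgroup Q)⁆ :=
            Subgroup.commutator_mono (ih a) le_rfl
        _ = Subgroup.lowerCentralSeries (⊤ : Subgroup Q) (a + b + 2) := rfl
    have h3 := Subgroup.commutator_commutator_eq_bot_of_rotate h1 h2
    rw [← le_bot_iff]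
    calc ⁅Subgroup.lowerCentralSeries (⊤ : Subgroup Q) a, Subgroup.lowerCentralSeries (⊤ : Subgroup Q) (b+1)⁆
        = ⁅Subgroup.lowerCentralSeries (⊤ : Subgroup Q) (b+1), Subgroup.lowerCentralSeries (⊤ : Subgroup Q) a⁆ := Subgroup.commutator_comm _ _
      _ = ⁅⁅Subgroup.lowerCentralSeries (⊤ : Subgroup Q) b, ⊤⁆, Subgroup.lowerCentralSeries (⊤ : Subgroup Q) a⁆ := rfl
      _ ≤ ⊥ := le_of_eq h3

theorem mem_lcs_central {G : Type*} [Group G] {n : ℕ}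
    (hbot : Subgroup.lowerCentralSeries (⊤ : Subgroup G) (n+1) = ⊥) {u : G}
    (hu : u ∈ Subgroup.lowerCentralSeries (⊤ : Subgroup G) n) (g : G) : u * g = g * u := by
  have : ⁅u, g⁆ ∈ Subgroup.lowerCentralSeries (⊤ : Subgroup G) (n+1) :=
    Subgroup.commutator_mem_commutator hu (Subgroup.mem_top g)
  rw [hbot, Subgroup.mem_bot] at this
  exact commutatorElement_eq_one_iff_mul_comm.mp this

open Subgroup FreeGroup

variable {α : Type*}

local notation "F" => FreeGroup α
local notation "Γ" => Subgroup.lowerCentralSeries (⊤ : Subgroup (FreeGroup α))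

theorem aut_mem_lcs (φ : MulAut (FreeGroup α)) {n : ℕ} {u : FreeGroup α}
    (hu : u ∈ Γ n) : φ u ∈ Γ n :=
  Subgroup.lowerCentralSeries.map (φ : FreeGroup α →* FreeGroup α) n
    (Subgroup.mem_map_of_mem _ hu)

/-- A subgroup of F with all generators is everything. -/
theorem free_eq_top (S : Subgroup (FreeGroup α)) (h : ∀ i : α, FreeGroup.of i ∈ S) : S = ⊤ := by
  rw [eq_top_iff, ← FreeGroup.closure_range_of, Subgroup.closure_le]
  rintro _ ⟨i, rfl⟩
  exact h i

/-- The set of elements moved into `N`-cosets of themselves. -/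
def fixSub (φ : MulAut (FreeGroup α)) (N : Subgroup (FreeGroup α)) [N.Normal]
    (hN : ∀ x ∈ N, φ x ∈ N) : Subgroup (FreeGroup α) where
  carrier := {x | φ x * x⁻¹ ∈ N}
  one_mem' := by simpa using one_mem N
  mul_mem' := by
    intro a b ha hb
    have key : φ (a * b) * (a * b)⁻¹ = (φ a * (φ b * b⁻¹) * (φ a)⁻¹) * (φ a * a⁻¹) := by
      rw [_root_.map_mul]; group
    show φ (a * b) * (a * b)⁻¹ ∈ N
    rw [key]
    exact mul_mem (Subgroup.Normal.conj_mem ‹N.Normal› _ hb _) ha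
  inv_mem' := by
    intro a ha
    have key : φ a⁻¹ * (a⁻¹)⁻¹ = (φ a)⁻¹ * (φ a * a⁻¹)⁻¹ * (φ a)⁻¹⁻¹ := by
      rw [_root_.map_inv]; group
    show φ a⁻¹ * (a⁻¹)⁻¹ ∈ N
    rw [key]
    exact Subgroup.Normal.conj_mem ‹N.Normal› _ (inv_mem ha) _

/-- Johnson-type filtration: φ acts trivially on F / Γ(n+1). -/
def InA (n : ℕ) (φ : MulAut (FreeGroup α)) : Prop :=
  ∀ x : FreeGroup α, φ x * x⁻¹ ∈ Γ (n+1)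

theorem InA_mono {n : ℕ} {φ : MulAut (FreeGroup α)} (h : InA n φ) : InA 0 φ :=
  fun x => Subgroup.lowerCentralSeries_antitone _ (by omega) (h x)

theorem InA_mul {n : ℕ} {φ ψ : MulAut (FreeGroup α)} (hφ : InA n φ) (hψ : InA n ψ) :
    InA n (φ * ψ) := by
  intro x
  have key : (φ * ψ) x * x⁻¹ = φ (ψ x * x⁻¹) * (φ x * x⁻¹) := by
    rw [MulAut.mul_apply, _root_.map_mul, _root_.map_inv]; group
  rw [key]
  exact mul_mem (aut_mem_lcs φ (hψ x)) (hφ x)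

theorem InA_inv {n : ℕ} {φ : MulAut (FreeGroup α)} (hφ : InA n φ) : InA n φ⁻¹ := by
  intro x
  have h := hφ (φ⁻¹ x)
  rw [MulAut.apply_inv_self] at h
  have key : φ⁻¹ x * x⁻¹ = (x * (φ⁻¹ x)⁻¹)⁻¹ := by group
  rw [key]
  exact inv_mem h

theorem InA_conj {n : ℕ} {φ : MulAut (FreeGroup α)} (ρ : MulAut (FreeGroup α))
    (hφ : InA n φ) : InA n (ρ * φ * ρ⁻¹) := by
  intro x
  have key : (ρ * φ * ρ⁻¹) x * x⁻¹ = ρ (φ (ρ⁻¹ x) * (ρ⁻¹ x)⁻¹) := by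
    rw [MulAut.mul_apply, MulAut.mul_apply, _root_.map_mul, _root_.map_inv, MulAut.apply_inv_self]
  rw [key]
  exact aut_mem_lcs ρ (hφ (ρ⁻¹ x))

/-- automorphisms conjugating each generator by an element of Γ n. -/
def conjAut (n : ℕ) : Subgroup (MulAut (FreeGroup α)) where
  carrier := {φ | ∀ i : α, ∃ u ∈ Γ n, φ (FreeGroup.of i) = u⁻¹ * FreeGroup.of i * u}
  one_mem' := fun i => ⟨1, one_mem _, by simp⟩
  mul_mem' := by
    rintro φ ψ hφ hψ i
    obtain ⟨u, hu, hu'⟩ := hφ i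
    obtain ⟨v, hv, hv'⟩ := hψ i
    refine ⟨u * φ v, mul_mem hu (aut_mem_lcs φ hv), ?_⟩
    rw [MulAut.mul_apply, hv', _root_.map_mul, _root_.map_mul, _root_.map_inv, hu']
    group
  inv_mem' := by
    rintro φ hφ i
    obtain ⟨u, hu, hu'⟩ := hφ i
    refine ⟨(φ⁻¹ u)⁻¹, inv_mem (aut_mem_lcs φ⁻¹ hu), φ.injective ?_⟩
    rw [MulAut.apply_inv_self, inv_inv, _root_.map_mul, _root_.map_mul, _root_.map_inv,
      MulAut.apply_inv_self, hu']
    group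

theorem conjAut_le_InA {n : ℕ} {φ : MulAut (FreeGroup α)} (hφ : φ ∈ conjAut n) : InA n φ := by
  have hN : ∀ x ∈ Γ (n+1), φ x ∈ Γ (n+1) := fun x hx => aut_mem_lcs φ hx
  have : fixSub φ (Γ (n+1)) hN = ⊤ := by
    apply free_eq_top
    intro i
    obtain ⟨u, hu, hu'⟩ := hφ i
    show φ (FreeGroup.of i) * (FreeGroup.of i)⁻¹ ∈ Γ (n+1)
    rw [hu']
    have key : u⁻¹ * FreeGroup.of i * u * (FreeGroup.of i)⁻¹ = ⁅u⁻¹, FreeGroup.of i⁆ := by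
      group
    rw [key]
    exact Subgroup.commutator_mem_commutator (inv_mem hu) (Subgroup.mem_top _)
  intro x
  have : x ∈ fixSub φ (Γ (n+1)) hN := by rw [this]; exact Subgroup.mem_top x
  exact this

theorem comm_aux {G : Type*} [Group G] (a b r s : G) (hr : ∀ g, r * g = g * r)
    (has : a * s = s * a) : ⁅a * r, b * s⁆ = ⁅a, b⁆ := by
  have hc : Commute a s := has
  have h2 : s * a⁻¹ = a⁻¹ * s := hc.inv_left.eq.symm
  have e1 : r * (b * s) = (b * s) * r := hr _
  calc ⁅a * r, b * s⁆ = a * (r * (b * s)) * (r⁻¹ * a⁻¹) * (s⁻¹ * b⁻¹) := by group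
    _ = a * ((b * s) * r) * (r⁻¹ * a⁻¹) * (s⁻¹ * b⁻¹) := by rw [e1]
    _ = a * b * (s * a⁻¹) * (s⁻¹ * b⁻¹) := by group
    _ = a * b * (a⁻¹ * s) * (s⁻¹ * b⁻¹) := by rw [h2]
    _ = ⁅a, b⁆ := by group

theorem InA_strong {ψ : MulAut (FreeGroup α)} (hψ : InA 0 ψ) (p : ℕ) :
    ∀ w ∈ Γ p, ψ w * w⁻¹ ∈ Γ (p+1) := by
  induction p with
  | zero => exact fun w _ => hψ w
  | succ p ih =>
    have hN : ∀ x ∈ Γ (p+2), ψ x ∈ Γ (p+2) := fun x hx => aut_mem_lcs ψ hx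
    have key : Subgroup.lowerCentralSeries (⊤ : Subgroup (FreeGroup α)) (p+1) ≤ fixSub ψ (Γ (p+2)) hN := by
      show ⁅Γ p, ⊤⁆ ≤ fixSub ψ (Γ (p+2)) hN
      rw [Subgroup.commutator_le]
      intro a ha b _
      show ψ ⁅a, b⁆ * ⁅a, b⁆⁻¹ ∈ Γ (p+2)
      set N := Γ (p+2) with hNdef
      set q : FreeGroup α →* (FreeGroup α ⧸ N) := QuotientGroup.mk' N with hq
      suffices hsuf : q (ψ ⁅a, b⁆) = q ⁅a, b⁆ by
        have h1 : q (ψ ⁅a, b⁆ * ⁅a, b⁆⁻¹) = 1 := by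
          rw [_root_.map_mul, _root_.map_inv, hsuf, mul_inv_cancel]
        rwa [← MonoidHom.mem_ker, QuotientGroup.ker_mk'] at h1
      have hr : a⁻¹ * ψ a ∈ Γ (p+1) := by
        have h0 := ih a ha
        have key2 : a⁻¹ * ψ a = a⁻¹ * (ψ a * a⁻¹) * a⁻¹⁻¹ := by group
        rw [key2]
        exact Subgroup.Normal.conj_mem (Subgroup.lowerCentralSeries_normal _ _) _ h0 _
      have hs : b⁻¹ * ψ b ∈ Γ 1 := by
        have h0 := hψ b
        have key2 : b⁻¹ * ψ b = b⁻¹ * (ψ b * b⁻¹) * b⁻¹⁻¹ := by group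
        rw [key2]
        exact Subgroup.Normal.conj_mem (Subgroup.lowerCentralSeries_normal _ _) _ h0 _
      have hsur := QuotientGroup.mk'_surjective N
      have hbot : Subgroup.lowerCentralSeries (⊤ : Subgroup (FreeGroup α ⧸ N)) (p+2) = ⊥ := by
        rw [← lcs_map_eq q hsur, Subgroup.map_eq_bot_iff, hq, QuotientGroup.ker_mk']
      have hrc : ∀ g, q (a⁻¹ * ψ a) * g = g * q (a⁻¹ * ψ a) :=
        mem_lcs_central hbot (Subgroup.lowerCentralSeries.map q (p+1) (Subgroup.mem_map_of_mem q hr))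
      have hac : q a * q (b⁻¹ * ψ b) = q (b⁻¹ * ψ b) * q a := by
        apply commutatorElement_eq_one_iff_mul_comm.mp
        have hmem : ⁅q a, q (b⁻¹ * ψ b)⁆ ∈
            ⁅Subgroup.lowerCentralSeries (⊤ : Subgroup (FreeGroup α ⧸ N)) p, Subgroup.lowerCentralSeries (⊤ : Subgroup (FreeGroup α ⧸ N)) 1⁆ :=
          Subgroup.commutator_mem_commutator
            (Subgroup.lowerCentralSeries.map q p (Subgroup.mem_map_of_mem q ha))
            (Subgroup.lowerCentralSeries.map q 1 (Subgroup.mem_map_of_mem q hs))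
        have h3 : ⁅q a, q (b⁻¹ * ψ b)⁆ ∈ Subgroup.lowerCentralSeries (⊤ : Subgroup (FreeGroup α ⧸ N)) (p+2) :=
          lcs_comm 1 p hmem
        rw [hbot, Subgroup.mem_bot] at h3
        exact h3
      have hψa : ψ a = a * (a⁻¹ * ψ a) := by group
      have hψb : ψ b = b * (b⁻¹ * ψ b) := by group
      calc q (ψ ⁅a, b⁆) = ⁅q (ψ a), q (ψ b)⁆ := by
            rw [map_commutatorElement, map_commutatorElement]
        _ = ⁅q a * q (a⁻¹ * ψ a), q b * q (b⁻¹ * ψ b)⁆ := by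
            rw [← _root_.map_mul, ← _root_.map_mul, ← hψa, ← hψb]
        _ = ⁅q a, q b⁆ := comm_aux _ _ _ _ hrc hac
        _ = q ⁅a, b⁆ := (map_commutatorElement _ _ _).symm
    exact fun w hw => key hw

theorem conj_commutator {n : ℕ} {φ ψ : MulAut (FreeGroup α)}
    (hφ : φ ∈ conjAut n) (hψ : ψ ∈ conjAut 0) : ⁅φ, ψ⁆ ∈ (conjAut (n+1) : Subgroup _) := by
  intro i
  obtain ⟨u, hu, hu'⟩ := hφ i
  obtain ⟨v, _, hv'⟩ := hψ i
  set X := FreeGroup.of i with hX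
  have h1 : ψ⁻¹ X = ψ⁻¹ v * X * (ψ⁻¹ v)⁻¹ := by
    apply ψ.injective
    rw [MulAut.apply_inv_self, _root_.map_mul, _root_.map_mul, _root_.map_inv,
      MulAut.apply_inv_self, hv']
    group
  have h2 : φ⁻¹ X = φ⁻¹ u * X * (φ⁻¹ u)⁻¹ := by
    apply φ.injective
    rw [MulAut.apply_inv_self, _root_.map_mul, _root_.map_mul, _root_.map_inv,
      MulAut.apply_inv_self, hu']
    group
  set P := u * φ v * (φ (ψ (φ⁻¹ u)))⁻¹ * (φ (ψ (φ⁻¹ (ψ⁻¹ v))))⁻¹ with hP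
  have hstep : ⁅φ, ψ⁆ X = φ (ψ (φ⁻¹ (ψ⁻¹ X))) := rfl
  have key : ⁅φ, ψ⁆ X = P⁻¹ * X * P := by
    rw [hstep, h1]
    simp only [_root_.map_mul, _root_.map_inv]
    rw [h2]
    simp only [_root_.map_mul, _root_.map_inv]
    rw [hv']
    simp only [_root_.map_mul, _root_.map_inv]
    rw [hu', hP]
    group
  refine ⟨P, ?_, key⟩
  -- now show P ∈ Γ (n+1)
  have hφA : InA n φ := conjAut_le_InA hφ
  have hψA : InA 0 ψ := conjAut_le_InA hψ
  have hσA : InA 0 (φ * ψ * φ⁻¹) :=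
    InA_mul (InA_mul (InA_mono hφA) hψA) (InA_inv (InA_mono hφA))
  have hσ : φ (ψ (φ⁻¹ u)) * u⁻¹ ∈ Γ (n+1) := InA_strong hσA n u hu
  have hτA : InA n (ψ * φ⁻¹ * ψ⁻¹) := InA_conj ψ (InA_inv hφA)
  have hθ : φ (ψ (φ⁻¹ (ψ⁻¹ v))) * (φ v)⁻¹ ∈ Γ (n+1) := by
    have h3 := hτA v
    have h4 : φ (ψ (φ⁻¹ (ψ⁻¹ v))) * (φ v)⁻¹ = φ ((ψ * φ⁻¹ * ψ⁻¹) v * v⁻¹) := by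
      rw [_root_.map_mul, _root_.map_inv]
      rfl
    rw [h4]
    exact aut_mem_lcs φ h3
  set N := Γ (n+1) with hNdef
  set q : FreeGroup α →* (FreeGroup α ⧸ N) := QuotientGroup.mk' N with hq
  have hker : ∀ x : FreeGroup α, x ∈ N ↔ q x = 1 := by
    intro x
    rw [hq, ← MonoidHom.mem_ker, QuotientGroup.ker_mk']
  have hqσ : q (φ (ψ (φ⁻¹ u))) = q u := by
    have := (hker _).mp hσ
    rwa [_root_.map_mul, _root_.map_inv, mul_inv_eq_one] at this
  have hqθ : q (φ (ψ (φ⁻¹ (ψ⁻¹ v)))) = q (φ v) := by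
    have := (hker _).mp hθ
    rwa [_root_.map_mul, _root_.map_inv, mul_inv_eq_one] at this
  rw [hker, hP, _root_.map_mul, _root_.map_mul, _root_.map_mul, _root_.map_inv, _root_.map_inv,
    hqσ, hqθ]
  have hbot : Subgroup.lowerCentralSeries (⊤ : Subgroup (FreeGroup α ⧸ N)) (n+1) = ⊥ := by
    rw [← lcs_map_eq q (QuotientGroup.mk'_surjective N), Subgroup.map_eq_bot_iff, hq,
      QuotientGroup.ker_mk']
  have hcomm : ⁅q u, q (φ v)⁆ ∈ Subgroup.lowerCentralSeries (⊤ : Subgroup (FreeGroup α ⧸ N)) (n+1) :=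
    Subgroup.commutator_mem_commutator
      (Subgroup.lowerCentralSeries.map q n (Subgroup.mem_map_of_mem q hu)) (Subgroup.mem_top _)
  rw [hbot, Subgroup.mem_bot] at hcomm
  calc q u * q (φ v) * (q u)⁻¹ * (q (φ v))⁻¹ = ⁅q u, q (φ v)⁆ := rfl
    _ = 1 := hcomm

section Centralizer

variable [DecidableEq α]

theorem chain'_reduce_eq (L : List (α × Bool))
    (h : L.Chain' fun a b => ¬(a.1 = b.1 ∧ a.2 = !b.2)) : FreeGroup.reduce L = L := by
  induction L with
  | nil => rfl
  | cons x T ih =>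
    have hT := ih h.tail
    rw [FreeGroup.reduce.cons, hT]
    cases T with
    | nil => rfl
    | cons hd tl =>
      have hx : ¬(x.1 = hd.1 ∧ x.2 = !hd.2) := (List.isChain_cons_cons.mp h).1
      show (if x.1 = hd.1 ∧ x.2 = !hd.2 then tl else x :: hd :: tl) = x :: hd :: tl
      rw [if_neg hx]

theorem chain'_reduce (L : List (α × Bool)) :
    (FreeGroup.reduce L).Chain' (fun a b => ¬(a.1 = b.1 ∧ a.2 = !b.2)) := by
  induction L with
  | nil => exact List.isChain_nil
  | cons x T ih =>
    rw [FreeGroup.reduce.cons]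
    cases h : FreeGroup.reduce T with
    | nil => exact List.isChain_singleton _
    | cons hd tl =>
      rw [h] at ih
      show List.Chain' _ (if x.1 = hd.1 ∧ x.2 = !hd.2 then tl else x :: hd :: tl)
      by_cases hc : x.1 = hd.1 ∧ x.2 = !hd.2
      · rw [if_pos hc]; exact ih.tail
      · rw [if_neg hc]; exact List.isChain_cons_cons.mpr ⟨hc, ih⟩

theorem toWord_chain' (w : FreeGroup α) :
    w.toWord.Chain' (fun a b => ¬(a.1 = b.1 ∧ a.2 = !b.2)) := by
  rw [← FreeGroup.reduce_toWord]; exact chain'_reduce _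

theorem mk_false_eq {i : α} : (FreeGroup.of i)⁻¹ = FreeGroup.mk [(i, false)] := by
  rw [show FreeGroup.of i = FreeGroup.mk [(i, true)] from rfl, FreeGroup.inv_mk]
  rfl

theorem head_step {i : α} {w : FreeGroup α} {b₀ : Bool} {T : List (α × Bool)}
    (hw : w.toWord = (i, b₀) :: T) :
    ∃ (w' : FreeGroup α) (s : ℤ), w'.toWord = T ∧ w = FreeGroup.of i ^ s * w' := by
  set w' := FreeGroup.mk [(i, !b₀)] * w with hw'
  have hmk : w = FreeGroup.mk ((i, b₀) :: T) := by rw [← hw, FreeGroup.mk_toWord]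
  have hred : FreeGroup.reduce ((i, b₀) :: T) = (i, b₀) :: T := by
    rw [← hw, FreeGroup.reduce_toWord, hw]
  have ht : w'.toWord = T := by
    rw [hw', hmk, FreeGroup.mul_mk, FreeGroup.toWord_mk]
    show FreeGroup.reduce ((i, !b₀) :: (i, b₀) :: T) = T
    rw [FreeGroup.reduce.cons, hred]
    show (if (i, !b₀).1 = (i, b₀).1 ∧ (i, !b₀).2 = !(i, b₀).2 then T
      else (i, !b₀) :: (i, b₀) :: T) = T
    rw [if_pos ⟨rfl, rfl⟩]
  refine ⟨w', if b₀ then 1 else -1, ht, ?_⟩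
  have hcancel : FreeGroup.of i ^ (if b₀ then (1:ℤ) else -1) * FreeGroup.mk [(i, !b₀)] = 1 := by
    cases b₀
    · show FreeGroup.of i ^ (-1 : ℤ) * FreeGroup.mk [(i, true)] = 1
      rw [zpow_neg, zpow_one, show FreeGroup.mk [(i, true)] = FreeGroup.of i from rfl]
      group
    · show FreeGroup.of i ^ (1 : ℤ) * FreeGroup.mk [(i, false)] = 1
      rw [zpow_one, ← mk_false_eq]
      group
  calc w = (FreeGroup.of i ^ (if b₀ then (1:ℤ) else -1) * FreeGroup.mk [(i, !b₀)]) * w := by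
        rw [hcancel, one_mul]
    _ = FreeGroup.of i ^ (if b₀ then (1:ℤ) else -1) * w' := by rw [hw', mul_assoc]

theorem centralizer_of_aux {i : α} : ∀ (n : ℕ) (w : FreeGroup α), w.toWord.length ≤ n →
    FreeGroup.of i * w = w * FreeGroup.of i → ∃ t : ℤ, w = FreeGroup.of i ^ t := by
  intro n
  induction n with
  | zero =>
    intro w hle _
    refine ⟨0, ?_⟩
    rw [zpow_zero]
    exact FreeGroup.toWord_eq_nil_iff.mp (List.length_eq_zero_iff.mp (Nat.le_zero.mp hle))
  | succ n ih =>
    intro w hle hcomm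
    cases hL : w.toWord with
    | nil => exact ⟨0, by rw [zpow_zero]; exact FreeGroup.toWord_eq_nil_iff.mp hL⟩
    | cons x T =>
      obtain ⟨a, b₀⟩ := x
      by_cases hai : a = i
      · rw [hai] at hL
        obtain ⟨w', s, ht, hw⟩ := head_step hL
        have hlen : w'.toWord.length ≤ n := by
          have := congrArg List.length hL
          rw [ht]
          simp only [List.length_cons] at this
          omega
        have hw2 : w' = FreeGroup.of i ^ (-s) * w := by rw [hw]; group
        have hcomm' : FreeGroup.of i * w' = w' * FreeGroup.of i := by
          rw [hw2]
          calc FreeGroup.of i * (FreeGroup.of i ^ (-s) * w)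
              = FreeGroup.of i ^ (-s) * (FreeGroup.of i * w) := by group
            _ = FreeGroup.of i ^ (-s) * w * FreeGroup.of i := by rw [hcomm, mul_assoc]
        obtain ⟨t, htw⟩ := ih w' hlen hcomm'
        exact ⟨s + t, by rw [hw, htw, ← zpow_add]⟩
      · rcases List.eq_nil_or_concat w.toWord with hnil | ⟨T', c, hconcat⟩
        · rw [hL] at hnil; exact absurd hnil (by simp)
        · by_cases hci : c.1 = i
          · -- last letter is an i-letter: pass to the inverse
            have hinv : w⁻¹.toWord = (i, !c.2) :: FreeGroup.invRev T' := by
              rw [FreeGroup.toWord_inv, hconcat]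
              simp [FreeGroup.invRev, hci]
            obtain ⟨v', s, hvt, hvw⟩ := head_step hinv
            have hlen : v'.toWord.length ≤ n := by
              have h0 := congrArg List.length hL
              have h1 := congrArg List.length hconcat
              simp only [List.length_cons] at h0
              rw [hvt]
              simp only [List.length_cons, List.length_append, List.length_singleton,
                List.length_concat] at h1 ⊢
              rw [FreeGroup.invRev_length]
              omega
            have hcinv : FreeGroup.of i * w⁻¹ = w⁻¹ * FreeGroup.of i := by
              calc FreeGroup.of i * w⁻¹ = w⁻¹ * (w * FreeGroup.of i) * w⁻¹ := by group
                _ = w⁻¹ * (FreeGroup.of i * w) * w⁻¹ := by rw [hcomm]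
                _ = w⁻¹ * FreeGroup.of i := by group
            have hv2 : v' = FreeGroup.of i ^ (-s) * w⁻¹ := by rw [hvw]; group
            have hcomm' : FreeGroup.of i * v' = v' * FreeGroup.of i := by
              rw [hv2]
              calc FreeGroup.of i * (FreeGroup.of i ^ (-s) * w⁻¹)
                  = FreeGroup.of i ^ (-s) * (FreeGroup.of i * w⁻¹) := by group
                _ = FreeGroup.of i ^ (-s) * w⁻¹ * FreeGroup.of i := by rw [hcinv, mul_assoc]
            obtain ⟨t, htv⟩ := ih v' hlen hcomm'
            refine ⟨-(s + t), ?_⟩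
            have hwi : w⁻¹ = FreeGroup.of i ^ (s + t) := by rw [hvw, htv, ← zpow_add]
            calc w = (w⁻¹)⁻¹ := by group
              _ = (FreeGroup.of i ^ (s + t))⁻¹ := by rw [hwi]
              _ = FreeGroup.of i ^ (-(s + t)) := by rw [← zpow_neg]
          · -- contradiction: both ends avoid i
            exfalso
            set M : List (α × Bool) := (i, true) :: (w.toWord ++ [(i, false)]) with hM
            have hchain : M.Chain' (fun a b => ¬(a.1 = b.1 ∧ a.2 = !b.2)) := by
              rw [hM]
              apply List.isChain_cons.mpr
              constructor
              · intro y hy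
                rw [hL] at hy
                simp only [List.cons_append, List.head?_cons, Option.mem_def,
                  Option.some.injEq] at hy
                subst hy
                simp only [not_and]
                intro h
                exact absurd h.symm hai
              · apply List.isChain_append.mpr
                refine ⟨toWord_chain' w, by simp, ?_⟩
                intro x hx y hy
                rw [hconcat, List.concat_eq_append, List.getLast?_concat] at hx
                simp only [Option.mem_def, Option.some.injEq] at hx hy
                simp only [List.head?_cons, Option.some.injEq] at hy
                subst hx
                subst hy
                simp only [not_and]
                intro h
                exact absurd h hci
            have hMred : FreeGroup.reduce M = M := chain'_reduce_eq M hchain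
            have hMw : FreeGroup.of i * w * (FreeGroup.of i)⁻¹ = FreeGroup.mk M := by
              rw [mk_false_eq,
                show FreeGroup.of i = FreeGroup.mk [(i, true)] from rfl,
                show w = FreeGroup.mk w.toWord from (FreeGroup.mk_toWord).symm,
                FreeGroup.mul_mk, FreeGroup.mul_mk, hM]
              simp
            have heq : FreeGroup.of i * w * (FreeGroup.of i)⁻¹ = w := by
              rw [hcomm]; group
            have hMword : M = w.toWord := by
              have h5 := congrArg FreeGroup.toWord (hMw.symm.trans heq)
              rwa [FreeGroup.toWord_mk, hMred] at h5
            have hlen2 := congrArg List.length hMword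
            simp only [hM, List.length_cons, List.length_append, List.length_singleton] at hlen2
            omega

theorem centralizer_of {i : α} {w : FreeGroup α}
    (h : FreeGroup.of i * w = w * FreeGroup.of i) : ∃ t : ℤ, w = FreeGroup.of i ^ t :=
  centralizer_of_aux w.toWord.length w le_rfl h

end Centralizer
-- braid chunk, appended after base
section Braid

variable {m : ℕ}

def goodSet (π : BraidGroup m →* Equiv.Perm (Fin (m + 1)))
    (A : BraidGroup m →* MulAut (FreeGroup (Fin (m + 1)))) : Subgroup (BraidGroup m) where
  carrier := {g | ∀ i : Fin (m + 1), ∃ u : FreeGroup (Fin (m + 1)),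
    A g (FreeGroup.of i) = u⁻¹ * FreeGroup.of (π g i) * u}
  one_mem' := fun i => ⟨1, by simp⟩
  mul_mem' := by
    rintro g h hg hh i
    obtain ⟨u, hu⟩ := hh i
    obtain ⟨v, hv⟩ := hg (π h i)
    refine ⟨v * A g u, ?_⟩
    rw [_root_.map_mul, MulAut.mul_apply, hu, _root_.map_mul, _root_.map_mul, _root_.map_inv,
      hv, _root_.map_mul π, Equiv.Perm.mul_apply]
    group
  inv_mem' := by
    rintro g hg i
    obtain ⟨u, hu⟩ := hg ((π g)⁻¹ i)
    refine ⟨((A g)⁻¹ u)⁻¹, ?_⟩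
    have hAinv : A g⁻¹ = (A g)⁻¹ := by rw [_root_.map_inv]
    have hfix : (A g)⁻¹ (A g (FreeGroup.of ((π g)⁻¹ i))) = FreeGroup.of ((π g)⁻¹ i) :=
      MulAut.inv_apply_self _ _ _
    have hpi : π g ((π g)⁻¹ i) = i := Equiv.apply_symm_apply _ i
    have hstart : FreeGroup.of i = u * A g (FreeGroup.of ((π g)⁻¹ i)) * u⁻¹ := by
      rw [hu, hpi]; group
    have hgoal : π g⁻¹ i = (π g)⁻¹ i := by rw [_root_.map_inv]
    rw [hAinv, hgoal, hstart, _root_.map_mul, _root_.map_mul, _root_.map_inv, hfix]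
    group

theorem goodSet_eq_top (π : BraidGroup m →* Equiv.Perm (Fin (m + 1)))
    (hπ : ∀ i : Fin m, π (PresentedGroup.of i) = Equiv.swap i.castSucc i.succ)
    (A : BraidGroup m →* MulAut (FreeGroup (Fin (m + 1))))
    (hA : ∀ i : Fin m,
      A (PresentedGroup.of i) (FreeGroup.of i.castSucc) =
        FreeGroup.of i.castSucc * FreeGroup.of i.succ * (FreeGroup.of i.castSucc)⁻¹ ∧
      A (PresentedGroup.of i) (FreeGroup.of i.succ) = FreeGroup.of i.castSucc ∧
      ∀ j : Fin (m + 1), j ≠ i.castSucc → j ≠ i.succ →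
        A (PresentedGroup.of i) (FreeGroup.of j) = FreeGroup.of j) :
    goodSet π A = ⊤ := by
  rw [eq_top_iff, ← PresentedGroup.closure_range_of (braidRels m), Subgroup.closure_le]
  rintro _ ⟨j, rfl⟩
  intro i
  rw [hπ j]
  by_cases h1 : i = j.castSucc
  · subst h1
    rw [Equiv.swap_apply_left]
    exact ⟨(FreeGroup.of j.castSucc)⁻¹, by rw [(hA j).1]; group⟩
  by_cases h2 : i = j.succ
  · subst h2
    rw [Equiv.swap_apply_right]
    exact ⟨1, by rw [(hA j).2.1]; group⟩
  · rw [Equiv.swap_apply_of_ne_of_ne h1 h2]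
    exact ⟨1, by rw [(hA j).2.2 i h1 h2]; group⟩

theorem pure_base (π : BraidGroup m →* Equiv.Perm (Fin (m + 1)))
    (A : BraidGroup m →* MulAut (FreeGroup (Fin (m + 1))))
    (hgood : goodSet π A = ⊤) (x : π.ker) :
    A (π.ker.subtype x) ∈ (conjAut 0 : Subgroup (MulAut (FreeGroup (Fin (m + 1))))) := by
  intro i
  have hx : (π.ker.subtype x) ∈ goodSet π A := hgood ▸ Subgroup.mem_top _
  obtain ⟨u, hu⟩ := hx i
  have hk : π (π.ker.subtype x) = 1 := x.2
  rw [hk] at hu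
  exact ⟨u, Subgroup.mem_top u, by rwa [Equiv.Perm.one_apply] at hu⟩

theorem braid_lcs_map (π : BraidGroup m →* Equiv.Perm (Fin (m + 1)))
    (A : BraidGroup m →* MulAut (FreeGroup (Fin (m + 1))))
    (hgood : goodSet π A = ⊤) (q : ℕ) :
    Subgroup.map (A.comp π.ker.subtype) (Subgroup.lowerCentralSeries (⊤ : Subgroup π.ker) q) ≤ conjAut q := by
  induction q with
  | zero =>
    rintro _ ⟨x, -, rfl⟩
    exact pure_base π A hgood x
  | succ q ih =>
    have h0 : Subgroup.lowerCentralSeries (⊤ : Subgroup π.ker) (q+1) = ⁅Subgroup.lowerCentralSeries (⊤ : Subgroup π.ker) q, ⊤⁆ := rfl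
    rw [h0, Subgroup.map_commutator, Subgroup.commutator_le]
    intro g1 hg1 g2 hg2
    obtain ⟨x, -, rfl⟩ := hg2
    exact conj_commutator (ih hg1) (pure_base π A hgood x)

end Braid

/-- If a pure braid `b` lies in the `k`-th term of the lower central series of the pure
braid group, then each of its longitudes `l_i(b)` (the conjugating elements in the Artin
action `A(b)(xᵢ) = lᵢ(b)⁻¹ xᵢ lᵢ(b)`, normalized so that the total exponent of `xᵢ` in
`lᵢ(b)` is zero) lies in the `k`-th term of the lower central series of the free group. -/
theorem longitudes_in_lowerCentralSeries (m k : ℕ) (hm : 1 ≤ m) (hk : 1 ≤ k)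
    (π : BraidGroup m →* Equiv.Perm (Fin (m + 1)))
    (hπ : ∀ i : Fin m, π (PresentedGroup.of i) = Equiv.swap i.castSucc i.succ)
    (A : BraidGroup m →* MulAut (FreeGroup (Fin (m + 1))))
    (hA : ∀ i : Fin m,
      A (PresentedGroup.of i) (FreeGroup.of i.castSucc) =
        FreeGroup.of i.castSucc * FreeGroup.of i.succ * (FreeGroup.of i.castSucc)⁻¹ ∧
      A (PresentedGroup.of i) (FreeGroup.of i.succ) = FreeGroup.of i.castSucc ∧
      ∀ j : Fin (m + 1), j ≠ i.castSucc → j ≠ i.succ →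
        A (PresentedGroup.of i) (FreeGroup.of j) = FreeGroup.of j)
    (b : BraidGroup m)
    (hb : b ∈ Subgroup.map π.ker.subtype (Subgroup.lowerCentralSeries (⊤ : Subgroup ↥π.ker) (k - 1))) :
    ∀ i : Fin (m + 1), ∀ l : FreeGroup (Fin (m + 1)),
      A b (FreeGroup.of i) = l⁻¹ * FreeGroup.of i * l →
      FreeGroup.lift (fun j => if j = i then Multiplicative.ofAdd (1 : ℤ) else 1) l = 1 →
      l ∈ Subgroup.lowerCentralSeries (⊤ : Subgroup (FreeGroup (Fin (m + 1)))) (k - 1) := by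
  intro i l hl hexp
  obtain ⟨x, hx, rfl⟩ := hb
  have hAb : A (π.ker.subtype x) ∈ (conjAut (k-1) : Subgroup _) :=
    braid_lcs_map π A (goodSet_eq_top π hπ A hA) (k-1) ⟨x, hx, rfl⟩
  obtain ⟨u, hu, hu'⟩ := hAb i
  -- u * l⁻¹ commutes with of i
  have hcomm : FreeGroup.of i * (u * l⁻¹) = (u * l⁻¹) * FreeGroup.of i := by
    have h := hu'.symm.trans hl
    calc FreeGroup.of i * (u * l⁻¹) = u * (u⁻¹ * FreeGroup.of i * u) * l⁻¹ := by group
      _ = u * (l⁻¹ * FreeGroup.of i * l) * l⁻¹ := by rw [h]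
      _ = (u * l⁻¹) * FreeGroup.of i := by group
  obtain ⟨t, ht⟩ := centralizer_of hcomm
  have hlu : l = (FreeGroup.of i ^ t)⁻¹ * u := by
    rw [← ht]; group
  rcases Nat.eq_zero_or_pos (k - 1) with hk0 | hk1
  · rw [hk0]
    exact Subgroup.mem_top l
  · -- exponent of u is 0
    have hucomm : u ∈ Subgroup.lowerCentralSeries (⊤ : Subgroup (FreeGroup (Fin (m+1)))) 1 :=
      Subgroup.lowerCentralSeries_antitone _ hk1 hu
    set E : FreeGroup (Fin (m+1)) →* Multiplicative ℤ :=
      FreeGroup.lift (fun j => if j = i then Multiplicative.ofAdd (1 : ℤ) else 1) with hE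
    have hEcomm : Subgroup.lowerCentralSeries (⊤ : Subgroup (FreeGroup (Fin (m+1)))) 1 ≤ E.ker := by
      show ⁅(⊤ : Subgroup (FreeGroup (Fin (m+1)))), ⊤⁆ ≤ E.ker
      rw [Subgroup.commutator_le]
      intro g1 _ g2 _
      rw [MonoidHom.mem_ker, map_commutatorElement]
      exact commutatorElement_eq_one_iff_mul_comm.mpr (mul_comm _ _)
    have hEu : E u = 1 := hEcomm hucomm
    have hEofi : E (FreeGroup.of i) = Multiplicative.ofAdd (1 : ℤ) := by
      rw [hE, FreeGroup.lift_apply_of, if_pos rfl]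
    have hEl : E l = (Multiplicative.ofAdd (1 : ℤ) ^ t)⁻¹ := by
      rw [hlu, _root_.map_mul, _root_.map_inv, map_zpow, hEofi, hEu, mul_one]
    rw [hexp] at hEl
    have ht0 : t = 0 := by
      have h2 := congrArg Multiplicative.toAdd hEl.symm
      simpa using h2
    rw [hlu, ht0, zpow_zero, inv_one, one_mul]
    exact hu
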